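/- Let C > 0 and set δ := e^{−C}. Let ε be a real number with 0 < ε < log 2 and set t₀ := 1/ε. Let y : ℝ → (0, ∞) be a differentiable nonincreasing function such that y(t₀) < δ e^{−2} and such that t·y'(t) − 2·y(t)·log y(t) ≤ C·y(t−1) for all t ≥ t₀ + 1. Then y(t) < δ e^{−ε t} for all t ≥ t₀. -/

import Mathlib

/-- First exponential decay step (inequality (i12)) in the proof that a
noncompact shrinking gradient Ricci soliton has infinite volume. -/
theorem stmt_6 (C ε : ℝ) (hC : 0 < C) (hε : 0 < ε) (hε2 : ε < Real.log 2)
    (y : ℝ → ℝ) (hy : ∀ t, 0 < y t) (hdiff : Differentiable ℝ y) (hmono : Antitone y)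
    (h0 : y (1 / ε) < Real.exp (-C) * Real.exp (-2))
    (hineq : ∀ t ≥ 1 / ε + 1,
      t * deriv y t - 2 * y t * Real.log (y t) ≤ C * y (t - 1)) :
    ∀ t ≥ 1 / ε, y t < Real.exp (-C) * Real.exp (-ε * t) := by
  set t₀ : ℝ := 1 / ε with ht₀
  have ht₀pos : 0 < t₀ := by positivity
  have hlog2 : Real.log 2 < 1 := by
    have := Real.log_two_lt_d9
    linarith
  set g : ℝ → ℝ := fun t => Real.exp (-C) * Real.exp (-ε * t) with hgdef
  have hgpos : ∀ t, 0 < g t := fun t => by positivity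
  have hgd : ∀ s : ℝ, HasDerivAt g (-ε * g s) s := by
    intro s
    have h1 : HasDerivAt (fun t : ℝ => -ε * t) (-ε) s := by
      simpa using (hasDerivAt_id s).const_mul (-ε)
    have h2 : HasDerivAt g _ s := (h1.exp).const_mul (Real.exp (-C))
    convert h2 using 1
    simp [hgdef]
    ring
  -- on [t₀, t₀+1], y < g
  have hsmall : ∀ t, t₀ ≤ t → t ≤ t₀ + 1 → y t < g t := by
    intro t h1 h2
    have hyt : y t ≤ y t₀ := hmono h1
    have h3 : y t < Real.exp (-C) * Real.exp (-2) := lt_of_le_of_lt hyt h0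
    refine lt_of_lt_of_le h3 ?_
    have : -ε * t ≥ -2 := by
      have hεt : ε * t ≤ ε * (t₀ + 1) := by nlinarith
      have : ε * t₀ = 1 := by
        rw [ht₀]; field_simp
      nlinarith
    have hexp : Real.exp (-2) ≤ Real.exp (-ε * t) := Real.exp_le_exp.mpr (by linarith)
    simp only [hgdef]
    exact mul_le_mul_of_nonneg_left hexp (Real.exp_pos (-C)).le
  by_contra hcon
  push_neg at hcon
  obtain ⟨t₁, ht₁, ht₁'⟩ := hcon
  set A : Set ℝ := {t | t₀ ≤ t ∧ g t ≤ y t} with hA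
  have hAne : A.Nonempty := ⟨t₁, ht₁, ht₁'⟩
  have hAbdd : BddBelow A := ⟨t₀, fun t ht => ht.1⟩
  have hAclosed : IsClosed A := by
    have : A = Set.Ici t₀ ∩ {t | g t ≤ y t} := rfl
    rw [this]
    exact isClosed_Ici.inter (isClosed_le (by fun_prop) hdiff.continuous)
  set s : ℝ := sInf A with hs
  have hsA : s ∈ A := hAclosed.csInf_mem hAne hAbdd
  have hst₀ : t₀ ≤ s := hsA.1
  have hless : ∀ t, t₀ ≤ t → t < s → y t < g t := by
    intro t htt hts
    by_contra hle
    push_neg at hle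
    exact absurd (csInf_le hAbdd ⟨htt, hle⟩) (not_le.mpr hts)
  have hs1 : t₀ + 1 < s := by
    rcases lt_or_ge (t₀ + 1) s with h | h
    · exact h
    · exact absurd hsA.2 (not_le.mpr (hsmall s hst₀ h))
  -- y s = g s
  have hyg : y s = g s := by
    refine le_antisymm ?_ hsA.2
    have hten : Filter.Tendsto (fun t => y t - g t) (nhdsWithin s (Set.Iio s))
        (nhds (y s - g s)) :=
      ((hdiff.continuous.sub (by fun_prop)).tendsto s).mono_left nhdsWithin_le_nhds
    have hev : ∀ᶠ t in nhdsWithin s (Set.Iio s), y t - g t ≤ 0 := by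
      filter_upwards [self_mem_nhdsWithin,
        eventually_nhdsWithin_of_eventually_nhds
          (eventually_gt_nhds (by linarith : t₀ < s))] with t ht1 ht2
      exact sub_nonpos.mpr (hless t ht2.le ht1).le
    have := le_of_tendsto hten hev
    linarith
  -- derivative comparison at s
  have hderiv : -ε * y s ≤ deriv y s := by
    have hyd : HasDerivAt y (deriv y s) s := (hdiff s).hasDerivAt
    have hhd : HasDerivWithinAt (fun t => y t - g t) (deriv y s - -ε * g s)
        (Set.Iio s) s := (hyd.sub (hgd s)).hasDerivWithinAt
    have htend := hasDerivWithinAt_iff_tendsto_slope.mp hhd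
    rw [Set.diff_singleton_eq_self (by simp)] at htend
    have hkey : 0 ≤ deriv y s - -ε * g s := by
      refine ge_of_tendsto htend ?_
      filter_upwards [self_mem_nhdsWithin,
        eventually_nhdsWithin_of_eventually_nhds
          (eventually_gt_nhds (by linarith : t₀ < s))] with t ht1 ht2
      have ht1' : t < s := ht1
      have hneg : y t - g t < 0 := sub_neg.mpr (hless t ht2.le ht1')
      rw [slope_def_field]
      have hz : y s - g s = 0 := by rw [hyg]; ring
      rw [div_nonneg_iff]
      right
      exact ⟨by simp only [hz]; linarith, by linarith⟩
    rw [hyg]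
    linarith
  -- the inequality at s
  have hmain := hineq s (by linarith)
  have hlogys : Real.log (y s) = -C + -ε * s := by
    rw [hyg, hgdef]
    simp [Real.log_mul (Real.exp_ne_zero _) (Real.exp_ne_zero _), Real.log_exp]
  have hs1t : y (s - 1) < g s * Real.exp ε := by
    have h1 : y (s - 1) < g (s - 1) := hless (s - 1) (by linarith) (by linarith)
    have h2 : g (s - 1) = g s * Real.exp ε := by
      simp only [hgdef]
      rw [show -ε * (s - 1) = -ε * s + ε from by ring, Real.exp_add]
      ring
    linarith [h1, h2.le]
  have hspos : 0 < s := by linarith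
  have hys := hy s
  have hexpε : Real.exp ε < 2 := by
    have : Real.exp ε < Real.exp (Real.log 2) := Real.exp_lt_exp.mpr hε2
    rwa [Real.exp_log (by norm_num)] at this
  -- combine
  have hgs : g s = y s := hyg.symm
  rw [hlogys] at hmain
  have h5 : s * (-ε * y s) ≤ s * deriv y s := by nlinarith
  have h6 : C * y (s - 1) < C * (y s * Real.exp ε) := by
    have := hs1t
    rw [hgs] at this
    nlinarith
  have hεs : 0 < ε * s := by positivity
  nlinarith [mul_pos hεs hys, mul_pos (mul_pos hC hys) (sub_pos.mpr hexpε)]
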